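/- arXiv:1901.04280 — 2 statements merged into one kernel-verified Lean document; each statement's English description precedes it below -/
import Mathlib

section
/- Let α > 2, let Ψ ≥ 1 be an integer, and let a > 0 and r₀ > 0 be real numbers, and set t₀ = 1/(1 + a r₀^{−α}). Then ∫_{r₀}^∞ (1 − (1 + a r^{−α})^{−Ψ}) · r dr = (a^{2/α}/α) · ∑_{i=1}^{Ψ} C(Ψ, i) · ∫_{t₀}^{1} t^{Ψ − i + 2/α − 1} (1 − t)^{i − 2/α − 1} dt, where C(Ψ, i) denotes the binomial coefficient; in particular, all integrals appearing are finite. -/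
open MeasureTheory Real

/-- Central integral evaluation of Proposition 5 (Appendix F): the exponent of the
interference Laplace transform as a sum of complementary incomplete Beta functions;
in particular all the integrals appearing are finite. -/
theorem stmt_8 (α : ℝ) (hα : 2 < α) (Ψ : ℕ) (hΨ : 1 ≤ Ψ) (a r₀ : ℝ)
    (ha : 0 < a) (hr₀ : 0 < r₀) (t₀ : ℝ) (ht₀ : t₀ = 1 / (1 + a * r₀ ^ (-α))) :
    IntegrableOn (fun r : ℝ => (1 - ((1 + a * r ^ (-α)) ^ Ψ)⁻¹) * r) (Set.Ioi r₀) ∧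
    (∀ i ∈ Finset.Icc 1 Ψ,
      IntegrableOn
        (fun t : ℝ => t ^ ((Ψ : ℝ) - (i : ℝ) + 2 / α - 1) * (1 - t) ^ ((i : ℝ) - 2 / α - 1))
        (Set.Ioo t₀ 1)) ∧
    (∫ r in Set.Ioi r₀, (1 - ((1 + a * r ^ (-α)) ^ Ψ)⁻¹) * r
      = (a ^ (2 / α) / α) * ∑ i ∈ Finset.Icc 1 Ψ, (Ψ.choose i : ℝ) *
          ∫ t in Set.Ioo t₀ 1,
            t ^ ((Ψ : ℝ) - (i : ℝ) + 2 / α - 1) * (1 - t) ^ ((i : ℝ) - 2 / α - 1)) := by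
  have hα0 : (0:ℝ) < α := by linarith
  have hαne : α ≠ 0 := ne_of_gt hα0
  set β : ℝ := 2 / α with hβdef
  have hβ0 : 0 < β := div_pos two_pos hα0
  have hβ1 : β < 1 := (div_lt_one hα0).mpr hα
  have hx₀ : 0 < a * r₀ ^ (-α) := mul_pos ha (rpow_pos_of_pos hr₀ _)
  have ht₀0 : 0 < t₀ := by rw [ht₀]; positivity
  have ht₀1 : t₀ < 1 := by
    rw [ht₀, div_lt_one (by linarith)]; linarith
  set c : ℝ := 1 / α with hcdef
  have hc0 : 0 < c := by positivity
  have hac : 0 < a ^ c := rpow_pos_of_pos ha c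
  set g : ℝ → ℝ := fun t => a ^ c * (t / (1 - t)) ^ c with hg
  set g' : ℝ → ℝ := fun t => a ^ c * (c * (t / (1 - t)) ^ (c - 1) * ((1 - t) ^ 2)⁻¹)
    with hg'
  -- strict monotonicity of g
  have hgmono : ∀ ⦃s t : ℝ⦄, 0 < s → s < t → t < 1 → g s < g t := by
    intro s t hs hst ht1
    have hs1 : s < 1 := hst.trans ht1
    have h1s : 0 < 1 - s := by linarith
    have h1t : 0 < 1 - t := by linarith
    have hw : s / (1 - s) < t / (1 - t) := by
      rw [div_lt_div_iff₀ h1s h1t]; nlinarith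
    simp only [hg]
    exact mul_lt_mul_of_pos_left
      (rpow_lt_rpow (div_nonneg hs.le h1s.le) hw hc0) hac
  -- fractional identity
  have hfrac : ∀ x : ℝ, 0 < x → (1 + x)⁻¹ / (1 - (1 + x)⁻¹) = x⁻¹ := by
    intro x hx
    have h1 : (1:ℝ) + x ≠ 0 := by positivity
    rw [div_eq_iff]
    · field_simp; ring
    · have : (1:ℝ) - (1 + x)⁻¹ = x / (1 + x) := by field_simp; ring
      rw [this]
      positivity
  -- g inverts r ↦ (1 + a r^{-α})⁻¹
  have hgr : ∀ r : ℝ, 0 < r → g ((1 + a * r ^ (-α))⁻¹) = r := by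
    intro r hr
    have hx : 0 < a * r ^ (-α) := mul_pos ha (rpow_pos_of_pos hr _)
    have hrα : 0 < r ^ α := rpow_pos_of_pos hr α
    have hwv : (1 + a * r ^ (-α))⁻¹ / (1 - (1 + a * r ^ (-α))⁻¹) = a⁻¹ * r ^ α := by
      rw [hfrac _ hx, Real.rpow_neg hr.le, mul_inv, inv_inv]
    simp only [hg]
    rw [hwv, Real.mul_rpow (inv_nonneg.mpr ha.le) hrα.le, ← Real.rpow_mul hr.le,
      show α * c = 1 by rw [hcdef]; field_simp, Real.rpow_one, Real.inv_rpow ha.le,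
      ← mul_assoc, mul_inv_cancel₀ (ne_of_gt hac), one_mul]
  have hgt₀ : g t₀ = r₀ := by
    have := hgr r₀ hr₀
    rwa [← one_div, ← ht₀] at this
  -- image of the substitution
  have himg : g '' Set.Ioo t₀ 1 = Set.Ioi r₀ := by
    apply Set.eq_of_subset_of_subset
    · rintro r ⟨t, ⟨htl, htr⟩, rfl⟩
      exact Set.mem_Ioi.mpr (hgt₀ ▸ hgmono ht₀0 htl htr)
    · intro r hr
      have hrr : r₀ < r := hr
      have hr0 : 0 < r := hr₀.trans hrr
      have hx : 0 < a * r ^ (-α) := mul_pos ha (rpow_pos_of_pos hr0 _)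
      refine ⟨(1 + a * r ^ (-α))⁻¹, ⟨?_, ?_⟩, hgr r hr0⟩
      · rw [ht₀, one_div]
        apply inv_strictAnti₀ (by positivity)
        have h1 : r ^ (-α) < r₀ ^ (-α) := by
          rw [Real.rpow_neg hr0.le, Real.rpow_neg hr₀.le]
          exact inv_strictAnti₀ (rpow_pos_of_pos hr₀ α) (rpow_lt_rpow hr₀.le hrr hα0)
        have := mul_lt_mul_of_pos_left h1 ha
        linarith
      · exact inv_lt_one_of_one_lt₀ (by linarith)
  -- derivative of g
  have hderiv : ∀ t ∈ Set.Ioo t₀ 1, HasDerivWithinAt g (g' t) (Set.Ioo t₀ 1) t := by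
    rintro t ⟨htl, htr⟩
    have ht : 0 < t := ht₀0.trans htl
    have h1t : 0 < 1 - t := by linarith
    have hw : 0 < t / (1 - t) := div_pos ht h1t
    have hwd : HasDerivAt (fun u : ℝ => u / (1 - u))
        ((1 * (1 - t) - t * (0 - 1)) / (1 - t) ^ 2) t :=
      HasDerivAt.div (hasDerivAt_id t) ((hasDerivAt_const t (1:ℝ)).sub (hasDerivAt_id t))
        (ne_of_gt h1t)
    have hrd : HasDerivAt (fun y : ℝ => y ^ c) (c * (t / (1 - t)) ^ (c - 1)) (t / (1 - t)) :=
      Real.hasDerivAt_rpow_const (Or.inl (ne_of_gt hw))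
    have hcomp := (hrd.comp t hwd).const_mul (a ^ c)
    have heq : g' t = a ^ c *
        (c * (t / (1 - t)) ^ (c - 1) * ((1 * (1 - t) - t * (0 - 1)) / (1 - t) ^ 2)) := by
      simp only [hg']
      rw [show (1 * (1 - t) - t * (0 - 1)) = 1 by ring]
      rw [one_div]
    rw [heq]
    exact (HasDerivAt.hasDerivWithinAt (by exact hcomp))
  have hd : ∀ t ∈ Set.Ioo t₀ 1, HasDerivWithinAt g (g' t) (Set.Ioo t₀ 1) t := hderiv
  have hinj : Set.InjOn g (Set.Ioo t₀ 1) := by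
    apply StrictMonoOn.injOn
    intro s hs t ht hst
    exact hgmono (ht₀0.trans hs.1) hst ht.2
  -- positivity of g'
  have hgpos : ∀ t ∈ Set.Ioo t₀ 1, 0 < g' t := by
    rintro t ⟨htl, htr⟩
    have ht : 0 < t := ht₀0.trans htl
    have h1t : 0 < 1 - t := by linarith
    have hw : 0 < t / (1 - t) := div_pos ht h1t
    simp only [hg']
    exact mul_pos hac (mul_pos (mul_pos hc0 (rpow_pos_of_pos hw _))
      (inv_pos.mpr (pow_pos h1t 2)))
  -- 1 + a (g t)^{-α} = t⁻¹
  have hgt : ∀ t : ℝ, 0 < t → t < 1 → 1 + a * (g t) ^ (-α) = t⁻¹ := by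
    intro t ht ht1
    have h1t : 0 < 1 - t := by linarith
    have hw : 0 < t / (1 - t) := div_pos ht h1t
    have h1 : (g t) ^ (-α) = a⁻¹ * (t / (1 - t))⁻¹ := by
      simp only [hg]
      rw [← Real.mul_rpow ha.le hw.le, ← Real.rpow_mul (mul_pos ha hw).le,
        show c * -α = -1 by rw [hcdef]; field_simp,
        Real.rpow_neg_one, mul_inv]
    rw [h1, ← mul_assoc, mul_inv_cancel₀ (ne_of_gt ha), one_mul]
    field_simp
    ring
  -- key pointwise identity for the transformed integrand
  have hH : ∀ t ∈ Set.Ioo t₀ 1,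
      |g' t| • ((1 - ((1 + a * (g t) ^ (-α)) ^ Ψ)⁻¹) * (g t))
        = a ^ β / α * ((1 - t ^ Ψ) * (t ^ (β - 1) * (1 - t) ^ (-β - 1))) := by
    rintro t htm
    obtain ⟨htl, htr⟩ := htm
    have ht : 0 < t := ht₀0.trans htl
    have h1t : 0 < 1 - t := by linarith
    have hw : 0 < t / (1 - t) := div_pos ht h1t
    rw [smul_eq_mul, abs_of_pos (hgpos t ⟨htl, htr⟩), hgt t ht htr, inv_pow, inv_inv]
    have e2 : (t / (1 - t)) ^ (β - 1) * ((1 - t) ^ 2)⁻¹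
        = t ^ (β - 1) * (1 - t) ^ (-β - 1) := by
      rw [Real.div_rpow ht.le h1t.le, div_eq_mul_inv, ← Real.rpow_neg h1t.le,
        ← Real.rpow_natCast (1 - t) 2, ← Real.rpow_neg h1t.le, mul_assoc,
        ← Real.rpow_add h1t]
      congr 1
      congr 1
      push_cast
      ring
    have key : g' t * g t = a ^ β / α * (t ^ (β - 1) * (1 - t) ^ (-β - 1)) := by
      rw [← e2]
      simp only [hg, hg']
      rw [show a ^ c * (c * (t / (1 - t)) ^ (c - 1) * ((1 - t) ^ 2)⁻¹)
            * (a ^ c * (t / (1 - t)) ^ c)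
          = (a ^ c * a ^ c) * c * ((t / (1 - t)) ^ (c - 1) * (t / (1 - t)) ^ c)
            * ((1 - t) ^ 2)⁻¹ from by ring,
        ← Real.rpow_add ha, ← Real.rpow_add hw,
        show c + c = β by rw [hcdef, hβdef]; ring,
        show c - 1 + c = β - 1 by rw [hcdef, hβdef]; ring, hcdef]
      ring
    calc g' t * ((1 - t ^ Ψ) * g t) = (1 - t ^ Ψ) * (g' t * g t) := by ring
      _ = (1 - t ^ Ψ) * (a ^ β / α * (t ^ (β - 1) * (1 - t) ^ (-β - 1))) := by rw [key]
      _ = a ^ β / α * ((1 - t ^ Ψ) * (t ^ (β - 1) * (1 - t) ^ (-β - 1))) := by ring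
  -- binomial identity
  have hbinom : ∀ t : ℝ, 0 < t → t < 1 →
      (1 - t ^ Ψ) * (t ^ (β - 1) * (1 - t) ^ (-β - 1))
        = ∑ i ∈ Finset.Icc 1 Ψ, (Ψ.choose i : ℝ) *
            (t ^ ((Ψ : ℝ) - (i : ℝ) + β - 1) * (1 - t) ^ ((i : ℝ) - β - 1)) := by
    intro t ht ht1
    have h1t : 0 < 1 - t := by linarith
    have hterm : ∀ i ∈ Finset.Icc 1 Ψ,
        (Ψ.choose i : ℝ) * (t ^ ((Ψ : ℝ) - (i : ℝ) + β - 1) * (1 - t) ^ ((i : ℝ) - β - 1))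
          = ((1 - t) ^ i * t ^ (Ψ - i) * (Ψ.choose i : ℝ))
              * (t ^ (β - 1) * (1 - t) ^ (-β - 1)) := by
      intro i hi
      obtain ⟨hi1, hi2⟩ := Finset.mem_Icc.mp hi
      have e1 : (Ψ : ℝ) - (i : ℝ) + β - 1 = ((Ψ - i : ℕ) : ℝ) + (β - 1) := by
        rw [Nat.cast_sub hi2]; ring
      have e2 : (i : ℝ) - β - 1 = (i : ℝ) + (-β - 1) := by ring
      rw [e1, e2, Real.rpow_add ht, Real.rpow_add h1t, Real.rpow_natCast, Real.rpow_natCast]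
      ring
    rw [Finset.sum_congr rfl hterm, ← Finset.sum_mul]
    congr 1
    have hpow := add_pow (1 - t) t Ψ
    rw [sub_add_cancel, one_pow] at hpow
    have hr : Finset.range (Ψ + 1) = insert 0 (Finset.Icc 1 Ψ) := by
      ext k
      simp only [Finset.mem_range, Finset.mem_insert, Finset.mem_Icc, Nat.lt_succ_iff]
      omega
    rw [hr, Finset.sum_insert (by simp)] at hpow
    simp only [pow_zero, Nat.sub_zero, Nat.choose_zero_right, Nat.cast_one, one_mul,
      mul_one] at hpow
    linarith
  -- integrability of the dominating function
  have hm : IntegrableOn (fun t : ℝ => (1 - t) ^ (-β)) (Set.Ioo t₀ 1) := by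
    have h1 : IntervalIntegrable (fun x : ℝ => x ^ (-β)) volume (1 - t₀) 0 :=
      intervalIntegral.intervalIntegrable_rpow' (by linarith)
    have h2 := h1.comp_sub_left 1
    simp only [sub_sub_cancel, sub_zero] at h2
    exact ((intervalIntegrable_iff_integrableOn_Ioc_of_le ht₀1.le).mp h2).mono_set
      Set.Ioo_subset_Ioc_self
  -- integrability of each Beta integrand
  have hIi : ∀ i ∈ Finset.Icc 1 Ψ, IntegrableOn
      (fun t : ℝ => t ^ ((Ψ : ℝ) - (i : ℝ) + β - 1) * (1 - t) ^ ((i : ℝ) - β - 1))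
      (Set.Ioo t₀ 1) := by
    intro i hi
    obtain ⟨hi1, hi2⟩ := Finset.mem_Icc.mp hi
    have hi1' : (1 : ℝ) ≤ (i : ℝ) := by exact_mod_cast hi1
    have hi2' : (i : ℝ) ≤ (Ψ : ℝ) := by exact_mod_cast hi2
    apply Integrable.mono' (hm.const_mul (t₀ ^ (β - 1)))
    · apply ContinuousOn.aestronglyMeasurable ?_ measurableSet_Ioo
      apply ContinuousOn.mul
      · exact continuousOn_id.rpow_const fun x hx => Or.inl (ne_of_gt (ht₀0.trans hx.1))
      · exact (continuousOn_const.sub continuousOn_id).rpow_const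
          fun x hx => Or.inl (by have := hx.2; intro h; simp only [Pi.sub_apply, id] at h; linarith)
    · filter_upwards [ae_restrict_mem measurableSet_Ioo] with t htm
      obtain ⟨htl, htr⟩ := htm
      have ht : 0 < t := ht₀0.trans htl
      have h1t : 0 < 1 - t := by linarith
      rw [Real.norm_eq_abs, abs_of_nonneg (by positivity)]
      have b1 : t ^ ((Ψ : ℝ) - (i : ℝ) + β - 1) ≤ t₀ ^ (β - 1) :=
        calc t ^ ((Ψ : ℝ) - (i : ℝ) + β - 1) ≤ t ^ (β - 1) :=
              Real.rpow_le_rpow_of_exponent_ge ht htr.le (by linarith)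
          _ ≤ t₀ ^ (β - 1) :=
              Real.rpow_le_rpow_of_nonpos ht₀0 htl.le (by linarith)
      have b2 : (1 - t) ^ ((i : ℝ) - β - 1) ≤ (1 - t) ^ (-β) :=
        Real.rpow_le_rpow_of_exponent_ge h1t (by linarith) (by linarith)
      exact mul_le_mul b1 b2 (Real.rpow_nonneg h1t.le _) (Real.rpow_nonneg ht₀0.le _)
  -- combined pointwise identity
  have hEq : ∀ t ∈ Set.Ioo t₀ 1,
      |g' t| • ((1 - ((1 + a * (g t) ^ (-α)) ^ Ψ)⁻¹) * (g t))
        = a ^ β / α * ∑ i ∈ Finset.Icc 1 Ψ, (Ψ.choose i : ℝ) *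
            (t ^ ((Ψ : ℝ) - (i : ℝ) + β - 1) * (1 - t) ^ ((i : ℝ) - β - 1)) := by
    intro t htm
    rw [hH t htm, ← hbinom t (ht₀0.trans htm.1) htm.2]
  -- integrability of the transformed integrand
  have hΦ : IntegrableOn (fun t : ℝ => a ^ β / α * ∑ i ∈ Finset.Icc 1 Ψ, (Ψ.choose i : ℝ) *
      (t ^ ((Ψ : ℝ) - (i : ℝ) + β - 1) * (1 - t) ^ ((i : ℝ) - β - 1))) (Set.Ioo t₀ 1) := by
    apply Integrable.const_mul
    exact integrable_finset_sum _ fun i hi => (hIi i hi).const_mul _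
  refine ⟨?_, hIi, ?_⟩
  · rw [← himg, integrableOn_image_iff_integrableOn_abs_deriv_smul measurableSet_Ioo hd hinj]
    exact hΦ.congr_fun (fun t ht => (hEq t ht).symm) measurableSet_Ioo
  · rw [← himg, integral_image_eq_integral_abs_deriv_smul measurableSet_Ioo hd hinj,
      MeasureTheory.setIntegral_congr_fun measurableSet_Ioo hEq,
      MeasureTheory.integral_const_mul,
      MeasureTheory.integral_finset_sum _ (fun i hi => (hIi i hi).const_mul _)]
    congr 1
    exact Finset.sum_congr rfl fun i hi => MeasureTheory.integral_const_mul _ _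
end

section
/- Let α > 2, let Ψ ≥ 1 be an integer, let p > 0 and w > 0 be real numbers, and let j ≥ 1 be an integer. Then the function g(s) = ∫_w^∞ ((1 + s p r^{−α})^{−Ψ} − 1) · r dr is j-times differentiable on (0, ∞), and for every s > 0 its j-th derivative equals g^{(j)}(s) = (−1)^j p^j · ((Ψ + j − 1)!/(Ψ − 1)!) · ∫_w^∞ r^{1 − jα} (1 + s p r^{−α})^{−Ψ − j} dr, the integral on the right-hand side being finite. -/
open MeasureTheory Real Set

lemma aux_hd (n : ℕ) (b s : ℝ) (h : 1 + s * b ≠ 0) :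
    HasDerivAt (fun s : ℝ => ((1 + s * b) ^ n)⁻¹)
      (-(n : ℝ) * b * ((1 + s * b) ^ (n + 1))⁻¹) s := by
  have h1 : HasDerivAt (fun s : ℝ => 1 + s * b) b s := by
    simpa using ((hasDerivAt_id s).mul_const b).const_add 1
  have h2 := (h1.pow n).inv (pow_ne_zero n h)
  refine h2.congr_deriv (Eq.symm ?_)
  cases n with
  | zero => simp
  | succ m =>
    simp only [Pi.pow_apply]
    rw [eq_div_iff (pow_ne_zero _ (pow_ne_zero _ h)), Nat.add_sub_cancel]
    have key : ((1 + s * b) ^ (m + 1 + 1))⁻¹ * ((1 + s * b) ^ (m + 1)) ^ 2 = (1 + s * b) ^ m := by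
      rw [inv_mul_eq_iff_eq_mul₀ (pow_ne_zero _ h)]; ring
    linear_combination (-((m + 1 : ℕ) : ℝ) * b) * key

lemma aux_bern (n : ℕ) (u : ℝ) (hu : 1 ≤ u) : |(u ^ n)⁻¹ - 1| ≤ n * (u - 1) := by
  have hu0 : 0 < u := lt_of_lt_of_le one_pos hu
  have h1 : (u ^ n)⁻¹ ≤ 1 := by
    rw [inv_le_one_iff₀]; right; exact one_le_pow₀ hu
  have h2 : 1 - (n : ℝ) * (u - 1) ≤ (u ^ n)⁻¹ := by
    have hb := one_add_mul_le_pow (a := u⁻¹ - 1) (by nlinarith [inv_nonneg.2 hu0.le] : (-2:ℝ) ≤ u⁻¹ - 1) n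
    have key : (u⁻¹ - 1 : ℝ) ≥ -(u - 1) := by
      have h3 : u⁻¹ - (1 - (u-1)) = (u-1)^2 / u := by field_simp; ring
      nlinarith [sq_nonneg (u-1), div_nonneg (sq_nonneg (u-1)) hu0.le]
    calc 1 - (n:ℝ) * (u - 1) = 1 + (n:ℝ) * (-(u-1)) := by ring
      _ ≤ 1 + (n:ℝ) * (u⁻¹ - 1) := by
          have := mul_le_mul_of_nonneg_left key (Nat.cast_nonneg (α := ℝ) n)
          linarith
      _ ≤ (1 + (u⁻¹ - 1)) ^ n := by simpa using hb
      _ = (u ^ n)⁻¹ := by rw [← inv_pow]; ring_nf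
  rw [abs_sub_le_iff]
  constructor
  · nlinarith [Nat.cast_nonneg (α := ℝ) n]
  · linarith

noncomputable def Gfun (α p w : ℝ) (Ψ k : ℕ) (s : ℝ) : ℝ :=
  ∫ r in Set.Ioi w, r ^ (1 - (k:ℝ)*α) * ((1 + s * p * r ^ (-α)) ^ (Ψ+k))⁻¹

-- continuity in r
lemma aux_cont (a s p c : ℝ) (hs : 0 ≤ s) (hp : 0 < p) (w : ℝ) (hw : 0 < w) (n : ℕ) :
    ContinuousOn (fun r : ℝ => r ^ c * ((1 + s * p * r ^ (-a)) ^ n)⁻¹) (Set.Ioi w) := by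
  intro r hr
  have hr0 : (0:ℝ) < r := hw.trans hr
  have h1 : ContinuousAt (fun r : ℝ => r ^ c) r :=
    Real.continuousAt_rpow_const r c (Or.inl hr0.ne')
  have h2 : ContinuousAt (fun r : ℝ => 1 + s * p * r ^ (-a)) r := by
    have := Real.continuousAt_rpow_const r (-a) (Or.inl hr0.ne')
    exact (continuousAt_const.mul this).const_add 1
  have hne : (1 + s * p * r ^ (-a)) ^ n ≠ 0 := by
    have : (0:ℝ) < 1 + s * p * r ^ (-a) := by positivity
    positivity
  exact (h1.mul ((h2.pow n).inv₀ hne)).continuousWithinAt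

lemma aux_cont0 (a s p : ℝ) (hs : 0 ≤ s) (hp : 0 < p) (w : ℝ) (hw : 0 < w) (n : ℕ) :
    ContinuousOn (fun r : ℝ => (((1 + s * p * r ^ (-a)) ^ n)⁻¹ - 1) * r) (Set.Ioi w) := by
  intro r hr
  have hr0 : (0:ℝ) < r := hw.trans hr
  have h2 : ContinuousAt (fun r : ℝ => 1 + s * p * r ^ (-a)) r := by
    have := Real.continuousAt_rpow_const r (-a) (Or.inl hr0.ne')
    exact (continuousAt_const.mul this).const_add 1
  have hne : (1 + s * p * r ^ (-a)) ^ n ≠ 0 := by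
    have : (0:ℝ) < 1 + s * p * r ^ (-a) := by positivity
    positivity
  exact ((((h2.pow n).inv₀ hne).sub continuousAt_const).mul continuousAt_id).continuousWithinAt

-- integrability of the k-th integrand, k ≥ 1
lemma aux_int (a : ℝ) (ha : 2 < a) (p w : ℝ) (hp : 0 < p) (hw : 0 < w)
    (n k : ℕ) (hk : 1 ≤ k) (s : ℝ) (hs : 0 ≤ s) :
    IntegrableOn (fun r : ℝ => r ^ (1 - (k:ℝ)*a) * ((1 + s * p * r ^ (-a)) ^ n)⁻¹)
      (Set.Ioi w) := by
  have hexp : 1 - (k:ℝ)*a < -1 := by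
    have : (1:ℝ) ≤ (k:ℝ) := by exact_mod_cast hk
    nlinarith
  have hmaj : IntegrableOn (fun r : ℝ => r ^ (1 - (k:ℝ)*a)) (Set.Ioi w) :=
    integrableOn_Ioi_rpow_of_lt hexp hw
  refine Integrable.mono hmaj ((aux_cont a s p _ hs hp w hw n).aestronglyMeasurable measurableSet_Ioi) ?_
  filter_upwards [ae_restrict_mem measurableSet_Ioi] with r hr
  have hr0 : (0:ℝ) < r := hw.trans hr
  have hu : (1:ℝ) ≤ 1 + s * p * r ^ (-a) := by
    have : (0:ℝ) ≤ s * p * r ^ (-a) := by positivity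
    linarith
  have hrc : (0:ℝ) < r ^ (1 - (k:ℝ)*a) := rpow_pos_of_pos hr0 _
  have hinv : ((1 + s * p * r ^ (-a)) ^ n)⁻¹ ≤ 1 := by
    rw [inv_le_one_iff₀]; right; exact one_le_pow₀ hu
  have hinv0 : (0:ℝ) < ((1 + s * p * r ^ (-a)) ^ n)⁻¹ := by positivity
  rw [Real.norm_eq_abs, Real.norm_eq_abs, abs_of_pos (by positivity), abs_of_pos hrc]
  nlinarith

lemma aux_int0 (a : ℝ) (ha : 2 < a) (p w : ℝ) (hp : 0 < p) (hw : 0 < w)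
    (n : ℕ) (s : ℝ) (hs : 0 ≤ s) :
    IntegrableOn (fun r : ℝ => (((1 + s * p * r ^ (-a)) ^ n)⁻¹ - 1) * r) (Set.Ioi w) := by
  have hexp : 1 - a < -1 := by linarith
  have hmaj : IntegrableOn (fun r : ℝ => (n : ℝ) * s * p * r ^ (1 - a)) (Set.Ioi w) :=
    ((integrableOn_Ioi_rpow_of_lt hexp hw).const_mul _)
  refine Integrable.mono hmaj
    ((aux_cont0 a s p hs hp w hw n).aestronglyMeasurable measurableSet_Ioi) ?_
  filter_upwards [ae_restrict_mem measurableSet_Ioi] with r hr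
  have hr0 : (0:ℝ) < r := hw.trans hr
  have hu : (1:ℝ) ≤ 1 + s * p * r ^ (-a) := by
    have : (0:ℝ) ≤ s * p * r ^ (-a) := by positivity
    linarith
  have hb := aux_bern n _ hu
  have hre : r ^ (-a) * r = r ^ (1 - a) := by
    nth_rewrite 2 [← Real.rpow_one r]
    rw [← Real.rpow_add hr0]; ring_nf
  rw [Real.norm_eq_abs, Real.norm_eq_abs, abs_mul, abs_of_pos hr0]
  have hb' : |(((1 + s * p * r ^ (-a)) ^ n)⁻¹ - 1)| ≤ (n:ℝ) * (s * p * r ^ (-a)) := by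
    nlinarith [hb]
  have h1 : |(((1 + s * p * r ^ (-a)) ^ n)⁻¹ - 1)| * r ≤ ((n:ℝ) * (s * p * r ^ (-a))) * r :=
    mul_le_mul_of_nonneg_right hb' hr0.le
  calc |(((1 + s * p * r ^ (-a)) ^ n)⁻¹ - 1)| * r
      ≤ ((n:ℝ) * (s * p * r ^ (-a))) * r := h1
    _ = (n:ℝ) * s * p * (r ^ (-a) * r) := by ring
    _ = (n:ℝ) * s * p * r ^ (1-a) := by rw [hre]
    _ ≤ |(n:ℝ) * s * p * r ^ (1-a)| := le_abs_self _

lemma aux_deriv0 (a : ℝ) (ha : 2 < a) (p w : ℝ) (hp : 0 < p) (hw : 0 < w)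
    (Ψ : ℕ) (s0 : ℝ) (hs0 : 0 < s0) :
    HasDerivAt (fun s : ℝ => ∫ r in Set.Ioi w, (((1 + s * p * r ^ (-a)) ^ Ψ)⁻¹ - 1) * r)
      ((-(Ψ : ℝ) * p) * Gfun a p w Ψ 1 s0) s0 := by
  have hexp : 1 - (1:ℝ)*a < -1 := by nlinarith
  have key := hasDerivAt_integral_of_dominated_loc_of_deriv_le (μ := volume.restrict (Set.Ioi w))
    (F := fun x r => (((1 + x * p * r ^ (-a)) ^ Ψ)⁻¹ - 1) * r)
    (F' := fun x r => (-(Ψ : ℝ) * p) *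
      (r ^ (1 - (1:ℝ)*a) * ((1 + x * p * r ^ (-a)) ^ (Ψ+1))⁻¹))
    (x₀ := s0) (bound := fun r => (Ψ : ℝ) * p * r ^ (1 - (1:ℝ)*a)) (Metric.ball_mem_nhds s0 hs0)
    ?_ ?_ ?_ ?_ ?_ ?_
  · obtain ⟨hint, hderiv⟩ := key
    have heq : (∫ r in Set.Ioi w, (-(Ψ : ℝ) * p) *
        (r ^ (1 - (1:ℝ)*a) * ((1 + s0 * p * r ^ (-a)) ^ (Ψ+1))⁻¹))
        = (-(Ψ : ℝ) * p) * Gfun a p w Ψ 1 s0 := by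
      rw [MeasureTheory.integral_const_mul]
      unfold Gfun
      congr 1
      simp only [Nat.cast_one]
    rw [heq] at hderiv
    exact hderiv
  · filter_upwards [eventually_gt_nhds hs0] with x hx
    exact (aux_cont0 a x p hx.le hp w hw Ψ).aestronglyMeasurable measurableSet_Ioi
  · exact aux_int0 a ha p w hp hw Ψ s0 hs0.le
  · exact ((aux_cont a s0 p _ hs0.le hp w hw (Ψ+1)).aestronglyMeasurable
      measurableSet_Ioi).const_mul _
  · filter_upwards [ae_restrict_mem measurableSet_Ioi] with r hr x hx
    have hr0 : (0:ℝ) < r := hw.trans hr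
    have hx0 : 0 < x := by
      rw [Metric.mem_ball, Real.dist_eq, abs_lt] at hx
      linarith [hx.1]
    have hu : (1:ℝ) ≤ 1 + x * p * r ^ (-a) := by
      have : (0:ℝ) ≤ x * p * r ^ (-a) := by positivity
      linarith
    have hinv : ((1 + x * p * r ^ (-a)) ^ (Ψ+1))⁻¹ ≤ 1 := by
      rw [inv_le_one_iff₀]; right; exact one_le_pow₀ hu
    have hinv0 : (0:ℝ) < ((1 + x * p * r ^ (-a)) ^ (Ψ+1))⁻¹ := by positivity
    have hrc : (0:ℝ) < r ^ (1 - (1:ℝ)*a) := rpow_pos_of_pos hr0 _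
    rw [Real.norm_eq_abs, abs_mul, abs_mul, abs_neg,
      abs_of_nonneg (Nat.cast_nonneg Ψ : (0:ℝ) ≤ ↑Ψ), abs_of_pos hp,
      abs_of_pos (mul_pos hrc hinv0)]
    have h2 : r ^ (1 - (1:ℝ)*a) * ((1 + x * p * r ^ (-a)) ^ (Ψ+1))⁻¹
        ≤ r ^ (1 - (1:ℝ)*a) := mul_le_of_le_one_right hrc.le hinv
    exact mul_le_mul_of_nonneg_left h2 (by positivity)
  · exact ((integrableOn_Ioi_rpow_of_lt hexp hw).const_mul _)
  · filter_upwards [ae_restrict_mem measurableSet_Ioi] with r hr x hx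
    have hr0 : (0:ℝ) < r := hw.trans hr
    have hx0 : 0 < x := by
      rw [Metric.mem_ball, Real.dist_eq, abs_lt] at hx
      linarith [hx.1]
    have hune : 1 + x * (p * r ^ (-a)) ≠ 0 := by
      have : (0:ℝ) < p * r ^ (-a) := by positivity
      nlinarith
    have hd := ((aux_hd Ψ (p * r ^ (-a)) x hune).sub_const 1).mul_const r
    have hre : r ^ (-a) * r = r ^ (1 - (1:ℝ)*a) := by
      nth_rewrite 2 [← Real.rpow_one r]
      rw [← Real.rpow_add hr0]; ring_nf
    simp only [mul_assoc]
    refine hd.congr_deriv (Eq.symm ?_)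
    rw [← hre]; ring

lemma aux_deriv (a : ℝ) (ha : 2 < a) (p w : ℝ) (hp : 0 < p) (hw : 0 < w)
    (Ψ k : ℕ) (hk : 1 ≤ k) (s0 : ℝ) (hs0 : 0 < s0) :
    HasDerivAt (Gfun a p w Ψ k) ((-(↑(Ψ+k) : ℝ) * p) * Gfun a p w Ψ (k+1) s0) s0 := by
  have hexp : 1 - ((k:ℝ)+1)*a < -1 := by
    have : (0:ℝ) ≤ (k:ℝ) := Nat.cast_nonneg k
    nlinarith
  have key := hasDerivAt_integral_of_dominated_loc_of_deriv_le (μ := volume.restrict (Set.Ioi w))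
    (F := fun x r => r ^ (1 - (k:ℝ)*a) * ((1 + x * p * r ^ (-a)) ^ (Ψ+k))⁻¹)
    (F' := fun x r => (-(↑(Ψ+k) : ℝ) * p) *
      (r ^ (1 - ((k:ℝ)+1)*a) * ((1 + x * p * r ^ (-a)) ^ (Ψ+k+1))⁻¹))
    (x₀ := s0) (bound := fun r => (↑(Ψ+k) : ℝ) * p * r ^ (1 - ((k:ℝ)+1)*a)) (Metric.ball_mem_nhds s0 hs0)
    ?_ ?_ ?_ ?_ ?_ ?_
  · obtain ⟨hint, hderiv⟩ := key
    have heq : (∫ r in Set.Ioi w, (-(↑(Ψ+k) : ℝ) * p) *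
        (r ^ (1 - ((k:ℝ)+1)*a) * ((1 + s0 * p * r ^ (-a)) ^ (Ψ+k+1))⁻¹))
        = (-(↑(Ψ+k) : ℝ) * p) * Gfun a p w Ψ (k+1) s0 := by
      rw [MeasureTheory.integral_const_mul]
      unfold Gfun
      congr 1
      simp only [Nat.cast_add, Nat.cast_one, ← add_assoc]
    rw [heq] at hderiv
    exact hderiv
  · filter_upwards [eventually_gt_nhds hs0] with x hx
    exact (aux_cont a x p _ hx.le hp w hw (Ψ+k)).aestronglyMeasurable measurableSet_Ioi
  · exact aux_int a ha p w hp hw (Ψ+k) k hk s0 hs0.le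
  · exact ((aux_cont a s0 p _ hs0.le hp w hw (Ψ+k+1)).aestronglyMeasurable
      measurableSet_Ioi).const_mul _
  · filter_upwards [ae_restrict_mem measurableSet_Ioi] with r hr x hx
    have hr0 : (0:ℝ) < r := hw.trans hr
    have hx0 : 0 < x := by
      rw [Metric.mem_ball, Real.dist_eq, abs_lt] at hx
      linarith [hx.1]
    have hu : (1:ℝ) ≤ 1 + x * p * r ^ (-a) := by
      have : (0:ℝ) ≤ x * p * r ^ (-a) := by positivity
      linarith
    have hinv : ((1 + x * p * r ^ (-a)) ^ (Ψ+k+1))⁻¹ ≤ 1 := by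
      rw [inv_le_one_iff₀]; right; exact one_le_pow₀ hu
    have hinv0 : (0:ℝ) < ((1 + x * p * r ^ (-a)) ^ (Ψ+k+1))⁻¹ := by positivity
    have hrc : (0:ℝ) < r ^ (1 - ((k:ℝ)+1)*a) := rpow_pos_of_pos hr0 _
    rw [Real.norm_eq_abs, abs_mul, abs_mul, abs_neg,
      abs_of_nonneg (Nat.cast_nonneg (Ψ+k) : (0:ℝ) ≤ ↑(Ψ+k)), abs_of_pos hp,
      abs_of_pos (mul_pos hrc hinv0)]
    have h2 : r ^ (1 - ((k:ℝ)+1)*a) * ((1 + x * p * r ^ (-a)) ^ (Ψ+k+1))⁻¹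
        ≤ r ^ (1 - ((k:ℝ)+1)*a) := mul_le_of_le_one_right hrc.le hinv
    exact mul_le_mul_of_nonneg_left h2 (by positivity)
  · exact ((integrableOn_Ioi_rpow_of_lt hexp hw).const_mul _)
  · filter_upwards [ae_restrict_mem measurableSet_Ioi] with r hr x hx
    have hr0 : (0:ℝ) < r := hw.trans hr
    have hx0 : 0 < x := by
      rw [Metric.mem_ball, Real.dist_eq, abs_lt] at hx
      linarith [hx.1]
    have hune : 1 + x * (p * r ^ (-a)) ≠ 0 := by
      have : (0:ℝ) < p * r ^ (-a) := by positivity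
      nlinarith
    have hd := (aux_hd (Ψ+k) (p * r ^ (-a)) x hune).const_mul (r ^ (1 - (k:ℝ)*a))
    have hre : r ^ (1 - (k:ℝ)*a) * r ^ (-a) = r ^ (1 - ((k:ℝ)+1)*a) := by
      rw [← Real.rpow_add hr0]; ring_nf
    simp only [mul_assoc]
    refine hd.congr_deriv (Eq.symm ?_)
    rw [← hre]; ring

/-- Differentiation under the integral sign (proof of Lemma 2, Appendix G): the j-th
derivative of the tier-wise exponent of the interference Laplace transform. -/
theorem stmt_9 (α : ℝ) (hα : 2 < α) (Ψ : ℕ) (hΨ : 1 ≤ Ψ) (p w : ℝ)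
    (hp : 0 < p) (hw : 0 < w) (j : ℕ) (hj : 1 ≤ j) :
    ContDiffOn ℝ (j : ℕ∞)
      (fun s : ℝ => ∫ r in Set.Ioi w, (((1 + s * p * r ^ (-α)) ^ Ψ)⁻¹ - 1) * r)
      (Set.Ioi 0) ∧
    ∀ s : ℝ, 0 < s →
      IntegrableOn
        (fun r : ℝ => r ^ (1 - (j : ℝ) * α) * ((1 + s * p * r ^ (-α)) ^ (Ψ + j))⁻¹)
        (Set.Ioi w) ∧
      iteratedDeriv j
          (fun s : ℝ => ∫ r in Set.Ioi w, (((1 + s * p * r ^ (-α)) ^ Ψ)⁻¹ - 1) * r) s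
        = (-1 : ℝ) ^ j * p ^ j *
            ((Nat.factorial (Ψ + j - 1) : ℝ) / (Nat.factorial (Ψ - 1) : ℝ)) *
            ∫ r in Set.Ioi w, r ^ (1 - (j : ℝ) * α) * ((1 + s * p * r ^ (-α)) ^ (Ψ + j))⁻¹ := by
  set g : ℝ → ℝ := fun s => ∫ r in Set.Ioi w, (((1 + s * p * r ^ (-α)) ^ Ψ)⁻¹ - 1) * r with hg
  -- smoothness
  have hC : ∀ n : ℕ, (∀ m : ℕ, 1 ≤ m → ContDiffOn ℝ (n : ℕ) (Gfun α p w Ψ m) (Set.Ioi 0)) ∧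
      ContDiffOn ℝ (n : ℕ) g (Set.Ioi 0) := by
    intro n
    induction n with
    | zero =>
      constructor
      · intro m hm
        rw [Nat.cast_zero, contDiffOn_zero]
        exact fun s hs =>
          ((aux_deriv α hα p w hp hw Ψ m hm s hs).differentiableAt.differentiableWithinAt).continuousWithinAt
      · rw [Nat.cast_zero, contDiffOn_zero]
        exact fun s hs =>
          ((aux_deriv0 α hα p w hp hw Ψ s hs).differentiableAt.differentiableWithinAt).continuousWithinAt
    | succ n ih =>
      have hcast : ((n + 1 : ℕ) : WithTop ℕ∞) = (n : ℕ) + 1 := by push_cast; rfl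
      constructor
      · intro m hm
        rw [hcast, contDiffOn_succ_iff_deriv_of_isOpen isOpen_Ioi]
        refine ⟨fun s hs =>
          (aux_deriv α hα p w hp hw Ψ m hm s hs).differentiableAt.differentiableWithinAt,
          by simp, ?_⟩
        have hcd : ContDiffOn ℝ (n : ℕ)
            (fun t => (-(↑(Ψ+m) : ℝ) * p) * Gfun α p w Ψ (m+1) t) (Set.Ioi 0) :=
          contDiffOn_const.mul (ih.1 (m+1) (by omega))
        exact hcd.congr fun s hs => (aux_deriv α hα p w hp hw Ψ m hm s hs).deriv
      · rw [hcast, contDiffOn_succ_iff_deriv_of_isOpen isOpen_Ioi]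
        refine ⟨fun s hs =>
          (aux_deriv0 α hα p w hp hw Ψ s hs).differentiableAt.differentiableWithinAt,
          by simp, ?_⟩
        have hcd : ContDiffOn ℝ (n : ℕ)
            (fun t => (-(Ψ : ℝ) * p) * Gfun α p w Ψ 1 t) (Set.Ioi 0) :=
          contDiffOn_const.mul (ih.1 1 le_rfl)
        exact hcd.congr fun s hs => (aux_deriv0 α hα p w hp hw Ψ s hs).deriv
  -- iterated derivative formula
  have hfacne : ((Ψ - 1).factorial : ℝ) ≠ 0 := by positivity
  have hD : ∀ k : ℕ, 1 ≤ k → ∀ s : ℝ, 0 < s →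
      iteratedDeriv k g s
        = ((-1:ℝ)^k * p^k * (((Ψ + k - 1).factorial : ℝ) / ((Ψ - 1).factorial : ℝ))) *
          Gfun α p w Ψ k s := by
    intro k
    induction k with
    | zero => omega
    | succ k ih =>
      intro _ s hs
      rcases Nat.eq_zero_or_pos k with hk0 | hk1
      · subst hk0
        rw [iteratedDeriv_one]
        rw [(aux_deriv0 α hα p w hp hw Ψ s hs).deriv]
        have hfac : ((Ψ + 1 - 1).factorial : ℝ) = (Ψ : ℝ) * ((Ψ - 1).factorial : ℝ) := by
          have := Nat.mul_factorial_pred (show Ψ ≠ 0 by omega)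
          rw [show Ψ + 1 - 1 = Ψ by omega]
          exact_mod_cast this.symm
        rw [hfac, mul_div_assoc, div_self hfacne, mul_one]
        ring
      · rw [iteratedDeriv_succ]
        have hev : iteratedDeriv k g =ᶠ[nhds s]
            (fun t => ((-1:ℝ)^k * p^k * (((Ψ + k - 1).factorial : ℝ) / ((Ψ - 1).factorial : ℝ))) *
              Gfun α p w Ψ k t) := by
          filter_upwards [isOpen_Ioi.mem_nhds hs] with t ht
          exact ih hk1 t ht
        rw [hev.deriv_eq]
        have hd := ((aux_deriv α hα p w hp hw Ψ k hk1 s hs).const_mul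
          ((-1:ℝ)^k * p^k * (((Ψ + k - 1).factorial : ℝ) / ((Ψ - 1).factorial : ℝ)))).deriv
        rw [hd]
        have hfac : ((Ψ + (k+1) - 1).factorial : ℝ)
            = ((Ψ + k : ℕ) : ℝ) * ((Ψ + k - 1).factorial : ℝ) := by
          have := Nat.mul_factorial_pred (show Ψ + k ≠ 0 by omega)
          rw [show Ψ + (k+1) - 1 = Ψ + k by omega]
          exact_mod_cast this.symm
        rw [hfac]
        ring
  refine ⟨?_, fun s hs => ⟨aux_int α hα p w hp hw (Ψ + j) j hj s hs.le, ?_⟩⟩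
  · exact_mod_cast (hC j).2
  · exact hD j hj s hs
end
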